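/- Let n ≥ 3. The complex special orthogonal group acts transitively on the set of nonzero null vectors: for any z, z' ∈ ℂⁿ with z ≠ 0, z' ≠ 0, Σⱼ zⱼ² = 0 and Σⱼ z'ⱼ² = 0, there exists a complex n×n matrix A with AᵀA = 1 and det A = 1 such that A z = z'. That is, D₀ ∖ {0} is a single SO(n,ℂ)-orbit when n ≥ 3. -/

import Mathlib

open Matrix

/-! Auxiliary reflections for the orthogonal group over ℂ. -/

noncomputable def oRefl (n : ℕ) (v : Fin n → ℂ) : Matrix (Fin n) (Fin n) ℂ :=
  1 - (2 / (v ⬝ᵥ v)) • vecMulVec v v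

lemma oRefl_transpose (n : ℕ) (v : Fin n → ℂ) : (oRefl n v)ᵀ = oRefl n v := by
  ext i j
  by_cases h : i = j
  · subst h; rfl
  · simp [oRefl, vecMulVec_apply, Matrix.one_apply, h, Ne.symm h, mul_comm]

lemma vecMulVec_mul_self (n : ℕ) (v : Fin n → ℂ) :
    vecMulVec v v * vecMulVec v v = (v ⬝ᵥ v) • vecMulVec v v := by
  ext i j
  simp only [Matrix.mul_apply, vecMulVec_apply, Matrix.smul_apply, smul_eq_mul,
    dotProduct, Finset.sum_mul]
  exact Finset.sum_congr rfl fun k _ => by ring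

lemma oRefl_mul_self (n : ℕ) (v : Fin n → ℂ) (h : v ⬝ᵥ v ≠ 0) :
    oRefl n v * oRefl n v = 1 := by
  have hcc : 2 / (v ⬝ᵥ v) * (2 / (v ⬝ᵥ v)) * (v ⬝ᵥ v) = 2 / (v ⬝ᵥ v) + 2 / (v ⬝ᵥ v) := by
    field_simp; ring
  rw [oRefl, sub_mul, one_mul, mul_sub, mul_one, Matrix.smul_mul, Matrix.mul_smul,
    vecMulVec_mul_self, smul_smul, smul_smul, hcc, add_smul]
  abel

lemma vecMulVec_mulVec (n : ℕ) (v x : Fin n → ℂ) :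
    (vecMulVec v v).mulVec x = (v ⬝ᵥ x) • v := by
  ext i
  simp only [Matrix.mulVec, dotProduct, vecMulVec_apply, Pi.smul_apply, smul_eq_mul,
    Finset.sum_mul]
  exact Finset.sum_congr rfl fun k _ => by ring

lemma oRefl_mulVec (n : ℕ) (v x : Fin n → ℂ) :
    (oRefl n v).mulVec x = x - (2 * (v ⬝ᵥ x) / (v ⬝ᵥ v)) • v := by
  rw [oRefl, Matrix.sub_mulVec, Matrix.one_mulVec, Matrix.smul_mulVec,
    vecMulVec_mulVec, smul_smul]
  congr 1
  ring

lemma oRefl_det (n : ℕ) (v : Fin n → ℂ) (h : v ⬝ᵥ v ≠ 0) : (oRefl n v).det = -1 := by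
  have key : oRefl n v = 1 + replicateCol Unit ((-(2 / (v ⬝ᵥ v))) • v) * replicateRow Unit v := by
    rw [oRefl, vecMulVec_eq Unit, sub_eq_add_neg, ← neg_smul, ← Matrix.smul_mul, ← replicateCol_smul]
  rw [key, det_one_add_replicateCol_mul_replicateRow, dotProduct_smul]
  simp only [smul_eq_mul]
  field_simp
  ring

lemma sub_dot_sub (n : ℕ) (x y : Fin n → ℂ) (hx : x ⬝ᵥ x = 0) (hy : y ⬝ᵥ y = 0) :
    (x - y) ⬝ᵥ (x - y) = -(2 * (x ⬝ᵥ y)) := by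
  rw [sub_dotProduct, dotProduct_sub, dotProduct_sub, hx, hy, dotProduct_comm y x]
  ring

lemma oRefl_map (n : ℕ) (x y : Fin n → ℂ) (hx : x ⬝ᵥ x = 0) (hy : y ⬝ᵥ y = 0)
    (hxy : x ⬝ᵥ y ≠ 0) : (oRefl n (x - y)).mulVec x = y := by
  have hvx : (x - y) ⬝ᵥ x = -(x ⬝ᵥ y) := by
    rw [sub_dotProduct, hx, dotProduct_comm y x]; ring
  rw [oRefl_mulVec, sub_dot_sub n x y hx hy, hvx]
  have h1 : 2 * (-(x ⬝ᵥ y)) / (-(2 * (x ⬝ᵥ y))) = 1 := by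
    field_simp
  rw [h1, one_smul]
  abel

lemma oRefl_fix (n : ℕ) (u y : Fin n → ℂ) (h : u ⬝ᵥ y = 0) :
    (oRefl n u).mulVec y = y := by
  rw [oRefl_mulVec, h]
  simp

/-- There is a vector not orthogonal to either of two given nonzero vectors. -/
lemma exists_common (n : ℕ) (z z' : Fin n → ℂ) (hz0 : z ≠ 0) (hz'0 : z' ≠ 0) :
    ∃ u : Fin n → ℂ, u ⬝ᵥ z ≠ 0 ∧ u ⬝ᵥ z' ≠ 0 := by
  obtain ⟨i, hi⟩ := Function.ne_iff.mp hz0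
  obtain ⟨j, hj⟩ := Function.ne_iff.mp hz'0
  simp only [Pi.zero_apply] at hi hj
  by_cases h1 : z' i ≠ 0
  · exact ⟨Pi.single i 1, by simp [single_dotProduct, hi], by simp [single_dotProduct, h1]⟩
  by_cases h2 : z j ≠ 0
  · exact ⟨Pi.single j 1, by simp [single_dotProduct, h2], by simp [single_dotProduct, hj]⟩
  push_neg at h1 h2
  refine ⟨Pi.single i 1 + Pi.single j 1, ?_, ?_⟩
  · simp [add_dotProduct, single_dotProduct, h2, hi]
  · simp [add_dotProduct, single_dotProduct, h1, hj]

/-- For a nonzero null vector `v` in dimension `≥ 3`, there is an anisotropic vector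
orthogonal to `v`. -/
lemma exists_ortho (n : ℕ) (hn : 3 ≤ n) (v : Fin n → ℂ) (hv0 : v ≠ 0)
    (hv : v ⬝ᵥ v = 0) : ∃ u : Fin n → ℂ, u ⬝ᵥ v = 0 ∧ u ⬝ᵥ u ≠ 0 := by
  obtain ⟨i, hi⟩ := Function.ne_iff.mp hv0
  simp only [Pi.zero_apply] at hi
  have hj : ∃ j, j ≠ i ∧ v j ≠ 0 := by
    by_contra h
    push_neg at h
    have : v ⬝ᵥ v = v i * v i := by
      rw [dotProduct]
      refine Finset.sum_eq_single i (fun b _ hb => ?_) (by simp)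
      rw [h b hb]; ring
    exact mul_ne_zero hi hi (this ▸ hv)
  obtain ⟨j, hji, hj⟩ := hj
  obtain ⟨k, hk⟩ : ∃ k : Fin n, k ∉ ({i, j} : Finset (Fin n)) := by
    by_contra h
    push_neg at h
    have hsub : (Finset.univ : Finset (Fin n)) ⊆ {i, j} := fun x _ => h x
    have hcard := Finset.card_le_card hsub
    have h2 : ({i, j} : Finset (Fin n)).card ≤ 2 :=
      (Finset.card_insert_le _ _).trans (by simp)
    simp [Finset.card_univ] at hcard
    omega
  simp only [Finset.mem_insert, Finset.mem_singleton, not_or] at hk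
  obtain ⟨hki, hkj⟩ := hk
  set w₁ : Fin n → ℂ := v j • (Pi.single i 1 : Fin n → ℂ) - v i • (Pi.single j 1 : Fin n → ℂ) with hw₁
  set w₂ : Fin n → ℂ := v k • (Pi.single i 1 : Fin n → ℂ) - v i • (Pi.single k 1 : Fin n → ℂ) with hw₂
  have hw₁v : w₁ ⬝ᵥ v = 0 := by
    simp [hw₁, sub_dotProduct, smul_dotProduct, single_dotProduct]
    ring
  have hw₂v : w₂ ⬝ᵥ v = 0 := by
    simp [hw₂, sub_dotProduct, smul_dotProduct, single_dotProduct]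
    ring
  have hw₁₁ : w₁ ⬝ᵥ w₁ = v j * v j + v i * v i := by
    simp [hw₁, sub_dotProduct, dotProduct_sub, smul_dotProduct, dotProduct_smul,
      single_dotProduct, dotProduct_single, Pi.single_apply, hji, Ne.symm hji]
  have hw₂₂ : w₂ ⬝ᵥ w₂ = v k * v k + v i * v i := by
    simp [hw₂, sub_dotProduct, dotProduct_sub, smul_dotProduct, dotProduct_smul,
      single_dotProduct, dotProduct_single, Pi.single_apply, hki, Ne.symm hki]
  have hw₁₂ : w₁ ⬝ᵥ w₂ = v j * v k := by
    simp [hw₁, hw₂, sub_dotProduct, dotProduct_sub, smul_dotProduct, dotProduct_smul,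
      single_dotProduct, dotProduct_single, Pi.single_apply, hki, Ne.symm hki, hkj,
      Ne.symm hkj, hji, Ne.symm hji]
    ring
  by_cases h1 : w₁ ⬝ᵥ w₁ ≠ 0
  · exact ⟨w₁, hw₁v, h1⟩
  by_cases h2 : w₂ ⬝ᵥ w₂ ≠ 0
  · exact ⟨w₂, hw₂v, h2⟩
  push_neg at h1 h2
  refine ⟨w₁ + w₂, ?_, ?_⟩
  · simp [add_dotProduct, hw₁v, hw₂v]
  · have hvk : v k ≠ 0 := by
      intro h
      rw [hw₂₂, h] at h2
      simp at h2
      exact hi h2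
    have : (w₁ + w₂) ⬝ᵥ (w₁ + w₂) = 2 * (v j * v k) := by
      rw [add_dotProduct, dotProduct_add, dotProduct_add, dotProduct_comm w₂ w₁, hw₁₂,
        h1, h2]
      ring
    rw [this]
    exact mul_ne_zero two_ne_zero (mul_ne_zero hj hvk)

lemma two_refl (n : ℕ) (v₁ v₂ : Fin n → ℂ) (h1 : v₁ ⬝ᵥ v₁ ≠ 0) (h2 : v₂ ⬝ᵥ v₂ ≠ 0) :
    (oRefl n v₁ * oRefl n v₂)ᵀ * (oRefl n v₁ * oRefl n v₂) = 1 ∧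
    (oRefl n v₁ * oRefl n v₂).det = 1 := by
  constructor
  · rw [transpose_mul, oRefl_transpose, oRefl_transpose, mul_assoc,
      ← mul_assoc (oRefl n v₁) (oRefl n v₁), oRefl_mul_self n v₁ h1, one_mul,
      oRefl_mul_self n v₂ h2]
  · rw [det_mul, oRefl_det n v₁ h1, oRefl_det n v₂ h2]
    norm_num

theorem stmt10 (n : ℕ) (hn : 3 ≤ n) (z z' : Fin n → ℂ)
    (hz0 : z ≠ 0) (hz'0 : z' ≠ 0)
    (hz : ∑ j, z j ^ 2 = 0) (hz' : ∑ j, z' j ^ 2 = 0) :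
    ∃ A : Matrix (Fin n) (Fin n) ℂ, Aᵀ * A = 1 ∧ A.det = 1 ∧ A.mulVec z = z' := by
  have hzz : z ⬝ᵥ z = 0 := by simpa [dotProduct, pow_two] using hz
  have hzz' : z' ⬝ᵥ z' = 0 := by simpa [dotProduct, pow_two] using hz'
  by_cases hc : z ⬝ᵥ z' = 0
  · -- orthogonal case: go through an intermediate null vector `w`
    obtain ⟨u, huz, huz'⟩ := exists_common n z z' hz0 hz'0
    set w : Fin n → ℂ := u - ((u ⬝ᵥ u) / (2 * (u ⬝ᵥ z))) • z with hw
    have hww : w ⬝ᵥ w = 0 := by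
      rw [hw, sub_dotProduct, dotProduct_sub, dotProduct_sub, dotProduct_smul,
        smul_dotProduct, smul_dotProduct, dotProduct_smul, hzz, dotProduct_comm z u]
      simp only [smul_eq_mul, mul_zero]
      field_simp
      ring
    have hzw : z ⬝ᵥ w ≠ 0 := by
      rw [hw, dotProduct_sub, dotProduct_smul, hzz, smul_zero, sub_zero, dotProduct_comm]
      exact huz
    have hwz' : w ⬝ᵥ z' ≠ 0 := by
      rw [hw, sub_dotProduct, smul_dotProduct, hc, smul_zero, sub_zero]
      exact huz'
    have h1 : (w - z') ⬝ᵥ (w - z') ≠ 0 := by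
      rw [sub_dot_sub n w z' hww hzz']
      exact neg_ne_zero.mpr (mul_ne_zero two_ne_zero hwz')
    have h2 : (z - w) ⬝ᵥ (z - w) ≠ 0 := by
      rw [sub_dot_sub n z w hzz hww]
      exact neg_ne_zero.mpr (mul_ne_zero two_ne_zero hzw)
    obtain ⟨hA1, hA2⟩ := two_refl n (w - z') (z - w) h1 h2
    refine ⟨oRefl n (w - z') * oRefl n (z - w), hA1, hA2, ?_⟩
    rw [← Matrix.mulVec_mulVec, oRefl_map n z w hzz hww hzw,
      oRefl_map n w z' hww hzz' hwz']
  · -- non-orthogonal case: one reflection, then fix the determinant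
    obtain ⟨u, huz', huu⟩ := exists_ortho n hn z' hz'0 hzz'
    have h2 : (z - z') ⬝ᵥ (z - z') ≠ 0 := by
      rw [sub_dot_sub n z z' hzz hzz']
      exact neg_ne_zero.mpr (mul_ne_zero two_ne_zero hc)
    obtain ⟨hA1, hA2⟩ := two_refl n u (z - z') huu h2
    refine ⟨oRefl n u * oRefl n (z - z'), hA1, hA2, ?_⟩
    rw [← Matrix.mulVec_mulVec, oRefl_map n z z' hzz hzz' hc, oRefl_fix n u z' huz']
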